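/- Assume the response set is a finite product 𝓡 = ∏_{n=1}^N 𝓡_n and the joint distribution has full support (P(s,r) > 0 for all s, r). For θ ∈ ℝ define the tilted posterior P_θ(s|r) = p(s)P^ni(r|s)^θ / ∑_{s'} p(s')P^ni(r|s')^θ and the mismatched loss D(θ) = ∑_{s,r} P(s,r) log(P(s|r)/P_θ(s|r)). Then D(0) = I(S;R), so inf_{θ∈ℝ} D(θ) ≤ I(S;R); and inf_{θ∈ℝ} D(θ) = I(S;R) if and only if every coordinate marginal P_n(·|s) is the same for all stimuli s (equivalently, I(S;R_n) = 0 for every n, equivalently the encoding loss ΔI(R;R^ni) = I(S;R) − I(S;R^ni) equals the full information I(S;R)). (When ignoring noise correlations, the mismatched-decoding loss D_DL equals the total encoded information if and only if the corresponding encoding loss does.) -/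

import Mathlib

open scoped BigOperators
set_option linter.unusedSectionVars false

/-- The `n`-th coordinate marginal `P_n(x|s)` of a conditional distribution on a
finite product response set. -/
noncomputable def coordMarginal {S : Type*} {N : ℕ} {R : Fin N → Type*}
    [∀ n, Fintype (R n)] [∀ n, DecidableEq (R n)]
    (P : S → (∀ n, R n) → ℝ) (n : Fin N) (s : S) (x : R n) : ℝ :=
  ∑ r, if r n = x then P s r else 0

/-- The noise-independent surrogate `P^ni(r|s) = ∏_n P_n(r_n|s)`. -/
noncomputable def pNI {S : Type*} {N : ℕ} {R : Fin N → Type*}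
    [∀ n, Fintype (R n)] [∀ n, DecidableEq (R n)]
    (P : S → (∀ n, R n) → ℝ) (s : S) (r : ∀ n, R n) : ℝ :=
  ∏ n, coordMarginal P n s (r n)

/-- Mutual information of `S` with a code having conditional distribution `G(x|s)`:
`I = ∑_{s,x} p(s) G(x|s) log (G(x|s) / ∑_{s'} p(s') G(x|s'))`. -/
noncomputable def mutInfo {S X : Type*} [Fintype S] [Fintype X]
    (p : S → ℝ) (G : S → X → ℝ) : ℝ :=
  ∑ s, ∑ x, p s * G s x * Real.log (G s x / ∑ s', p s' * G s' x)

/-- The mismatched loss `D(θ) = ∑_{s,r} P(s,r) log (P(s|r) / P_θ(s|r))`, where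
`P_θ(s|r) = p(s) P^ni(r|s)^θ / ∑_{s'} p(s') P^ni(r|s')^θ` is the tilted posterior
(the exponentiation is the real power `Real.rpow`). -/
noncomputable def mismatchLoss {S : Type*} [Fintype S] {N : ℕ} {R : Fin N → Type*}
    [∀ n, Fintype (R n)] [∀ n, DecidableEq (R n)]
    (p : S → ℝ) (P : S → (∀ n, R n) → ℝ) (θ : ℝ) : ℝ :=
  ∑ s, ∑ r, p s * P s r *
    Real.log (((p s * P s r) / (∑ s', p s' * P s' r)) /
      ((p s * pNI P s r ^ θ) / (∑ s', p s' * pNI P s' r ^ θ)))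


section helpers
variable {S : Type*} [Fintype S] {N : ℕ} {R : Fin N → Type*}
    [∀ n, Fintype (R n)] [∀ n, DecidableEq (R n)]

/-- Gibbs' inequality. -/
lemma my_gibbs {ι : Type*} [Fintype ι] (a b : ι → ℝ) (ha : ∀ i, 0 < a i)
    (hb : ∀ i, 0 < b i) (hab : ∑ i, b i ≤ ∑ i, a i) :
    0 ≤ ∑ i, a i * Real.log (a i / b i) := by
  have key : ∑ i, a i * Real.log (b i / a i) ≤ ∑ i, (b i - a i) := by
    refine Finset.sum_le_sum fun i _ => ?_
    have h1 := Real.log_le_sub_one_of_pos (div_pos (hb i) (ha i))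
    have h2 : a i * (b i / a i - 1) = b i - a i := by
      rw [mul_sub, mul_div_cancel₀ _ (ha i).ne']; ring
    nlinarith [ha i]
  have hsum : ∑ i, (b i - a i) ≤ 0 := by
    rw [Finset.sum_sub_distrib]; linarith
  have hneg : ∑ i, a i * Real.log (a i / b i)
      = - ∑ i, a i * Real.log (b i / a i) := by
    rw [← Finset.sum_neg_distrib]
    refine Finset.sum_congr rfl fun i _ => ?_
    rw [Real.log_div (ha i).ne' (hb i).ne', Real.log_div (hb i).ne' (ha i).ne']
    ring
  rw [hneg]; linarith

/-- Fiber-sum / marginalization identity. -/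
lemma my_fiber (w : (∀ n, R n) → ℝ) (n : Fin N) (F : R n → ℝ) :
    ∑ r, w r * F (r n) = ∑ x, (∑ r, if r n = x then w r else 0) * F x := by
  simp_rw [Finset.sum_mul, ite_mul, zero_mul]
  rw [Finset.sum_comm]
  refine Finset.sum_congr rfl fun r _ => ?_
  simp

lemma my_cm_pos (P : S → (∀ n, R n) → ℝ) (hP0 : ∀ s r, 0 < P s r)
    [Nonempty (∀ n, R n)] (n : Fin N) (s : S) (x : R n) :
    0 < coordMarginal P n s x := by
  classical
  set r0 : ∀ n, R n := Classical.arbitrary _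
  refine Finset.sum_pos' (fun r _ => by split <;> simp [le_of_lt, hP0]) ⟨Function.update r0 n x,
    Finset.mem_univ _, ?_⟩
  simp [Function.update_self, hP0]

lemma my_pNI_pos (P : S → (∀ n, R n) → ℝ) (hP0 : ∀ s r, 0 < P s r)
    [Nonempty (∀ n, R n)] (s : S) (r : ∀ n, R n) : 0 < pNI P s r :=
  Finset.prod_pos fun n _ => my_cm_pos P hP0 n s (r n)

lemma my_cm_sum (P : S → (∀ n, R n) → ℝ) (n : Fin N) (s : S) :
    ∑ x, coordMarginal P n s x = ∑ r, P s r := by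
  unfold coordMarginal
  rw [Finset.sum_comm]
  refine Finset.sum_congr rfl fun r _ => ?_
  simp


lemma my_nonempty_S {S : Type*} [Fintype S] (p : S → ℝ) (hp1 : ∑ s, p s = 1) :
    Nonempty S := by
  by_contra h
  rw [not_nonempty_iff] at h
  rw [Finset.univ_eq_empty, Finset.sum_empty] at hp1
  exact one_ne_zero hp1.symm

lemma my_nonempty_R (p : S → ℝ) (hp1 : ∑ s, p s = 1)
    (P : S → (∀ n, R n) → ℝ) (hP1 : ∀ s, ∑ r, P s r = 1) :
    Nonempty (∀ n, R n) := by
  have hS : Nonempty S := my_nonempty_S p hp1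
  obtain ⟨s⟩ := hS
  by_contra h
  rw [not_nonempty_iff] at h
  have := hP1 s
  rw [Finset.univ_eq_empty, Finset.sum_empty] at this
  exact one_ne_zero this.symm

lemma my_loss_identity (p : S → ℝ) (hp : ∀ s, 0 < p s) (hp1 : ∑ s, p s = 1)
    (P : S → (∀ n, R n) → ℝ) (hP0 : ∀ s r, 0 < P s r)
    [Nonempty (∀ n, R n)] (θ : ℝ) :
    mismatchLoss p P θ = mutInfo p P
      + ∑ r, (∑ s, p s * P s r) * Real.log (∑ s', p s' * pNI P s' r ^ θ)
      - θ * ∑ s, ∑ r, p s * P s r * Real.log (pNI P s r) := by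
  classical
  have hS : Nonempty S := my_nonempty_S p hp1
  have hM : ∀ r, 0 < ∑ s', p s' * P s' r := fun r =>
    Finset.sum_pos (fun s _ => mul_pos (hp s) (hP0 s r)) Finset.univ_nonempty
  have hZ : ∀ r, 0 < ∑ s', p s' * pNI P s' r ^ θ := fun r =>
    Finset.sum_pos (fun s _ => mul_pos (hp s)
      (Real.rpow_pos_of_pos (my_pNI_pos P hP0 s r) θ)) Finset.univ_nonempty
  have key : ∀ s r, p s * P s r *
      Real.log (((p s * P s r) / (∑ s', p s' * P s' r)) /
        ((p s * pNI P s r ^ θ) / (∑ s', p s' * pNI P s' r ^ θ)))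
      = p s * P s r * Real.log (P s r / ∑ s', p s' * P s' r)
        + p s * P s r * Real.log (∑ s', p s' * pNI P s' r ^ θ)
        - θ * (p s * P s r * Real.log (pNI P s r)) := by
    intro s r
    have h1 : 0 < p s * P s r := mul_pos (hp s) (hP0 s r)
    have h2 : 0 < pNI P s r := my_pNI_pos P hP0 s r
    have h3 : 0 < pNI P s r ^ θ := Real.rpow_pos_of_pos h2 θ
    rw [Real.log_div (div_pos h1 (hM r)).ne' (div_pos (mul_pos (hp s) h3) (hZ r)).ne',
        Real.log_div h1.ne' (hM r).ne', Real.log_div (mul_pos (hp s) h3).ne' (hZ r).ne',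
        Real.log_mul (hp s).ne' (hP0 s r).ne', Real.log_mul (hp s).ne' h3.ne',
        Real.log_rpow h2, Real.log_div (hP0 s r).ne' (hM r).ne']
    ring
  have expand : mismatchLoss p P θ
      = ∑ s, ∑ r, (p s * P s r * Real.log (P s r / ∑ s', p s' * P s' r)
        + p s * P s r * Real.log (∑ s', p s' * pNI P s' r ^ θ)
        - θ * (p s * P s r * Real.log (pNI P s r))) :=
    Finset.sum_congr rfl fun s _ => Finset.sum_congr rfl fun r _ => key s r
  rw [expand]
  have swap : ∑ s, ∑ r, p s * P s r * Real.log (∑ s', p s' * pNI P s' r ^ θ)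
      = ∑ r, (∑ s, p s * P s r) * Real.log (∑ s', p s' * pNI P s' r ^ θ) := by
    rw [Finset.sum_comm]
    exact Finset.sum_congr rfl fun r _ => (Finset.sum_mul _ _ _).symm
  simp_rw [Finset.sum_sub_distrib, Finset.sum_add_distrib, ← Finset.mul_sum]
  rw [swap]
  rfl


lemma my_sum_M (p : S → ℝ) (hp1 : ∑ s, p s = 1)
    (P : S → (∀ n, R n) → ℝ) (hP1 : ∀ s, ∑ r, P s r = 1) :
    ∑ r, ∑ s, p s * P s r = 1 := by
  rw [Finset.sum_comm]
  calc ∑ s, ∑ r, p s * P s r = ∑ s, p s * ∑ r, P s r := by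
        simp_rw [Finset.mul_sum]
    _ = 1 := by simp_rw [hP1, mul_one]; exact hp1

lemma my_loss_nonneg (p : S → ℝ) (hp : ∀ s, 0 < p s) (hp1 : ∑ s, p s = 1)
    (P : S → (∀ n, R n) → ℝ) (hP0 : ∀ s r, 0 < P s r) (hP1 : ∀ s, ∑ r, P s r = 1)
    [Nonempty (∀ n, R n)] (θ : ℝ) : 0 ≤ mismatchLoss p P θ := by
  classical
  have hS : Nonempty S := my_nonempty_S p hp1
  have hM : ∀ r, 0 < ∑ s', p s' * P s' r := fun r =>
    Finset.sum_pos (fun s _ => mul_pos (hp s) (hP0 s r)) Finset.univ_nonempty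
  have hZ : ∀ r, 0 < ∑ s', p s' * pNI P s' r ^ θ := fun r =>
    Finset.sum_pos (fun s _ => mul_pos (hp s)
      (Real.rpow_pos_of_pos (my_pNI_pos P hP0 s r) θ)) Finset.univ_nonempty
  set J : S × (∀ n, R n) → ℝ := fun q => p q.1 * P q.1 q.2 with hJ
  set Q : S × (∀ n, R n) → ℝ := fun q =>
    p q.1 * pNI P q.1 q.2 ^ θ * (∑ s', p s' * P s' q.2)
      / (∑ s', p s' * pNI P s' q.2 ^ θ) with hQ
  have hJpos : ∀ q, 0 < J q := fun q => mul_pos (hp q.1) (hP0 q.1 q.2)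
  have hQpos : ∀ q, 0 < Q q := fun q => div_pos (mul_pos
    (mul_pos (hp q.1) (Real.rpow_pos_of_pos (my_pNI_pos P hP0 q.1 q.2) θ))
    (hM q.2)) (hZ q.2)
  have hsumJ : ∑ q, J q = 1 := by
    rw [Fintype.sum_prod_type, hJ]
    simp only []
    calc ∑ s, ∑ r, p s * P s r = ∑ s, p s * ∑ r, P s r := by
          simp_rw [Finset.mul_sum]
      _ = 1 := by simp_rw [hP1, mul_one]; exact hp1
  have hsumQ : ∑ q, Q q = 1 := by
    rw [Fintype.sum_prod_type_right, hQ]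
    have step : ∀ r : (∀ n, R n), ∑ s, p s * pNI P s r ^ θ
        * (∑ s', p s' * P s' r) / (∑ s', p s' * pNI P s' r ^ θ)
        = ∑ s, p s * P s r := by
      intro r
      rw [← Finset.sum_div, ← Finset.sum_mul, mul_div_assoc,
        mul_comm, div_mul_cancel₀ _ (hZ r).ne']
      
    calc (∑ r, ∑ s, p s * pNI P s r ^ θ * (∑ s', p s' * P s' r)
          / (∑ s', p s' * pNI P s' r ^ θ))
        = ∑ r, ∑ s, p s * P s r := Finset.sum_congr rfl fun r _ => step r
      _ = 1 := my_sum_M p hp1 P hP1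
  have hg := my_gibbs J Q hJpos hQpos (le_of_eq (hsumQ.trans hsumJ.symm))
  refine le_trans hg (le_of_eq ?_)
  rw [Fintype.sum_prod_type]
  unfold mismatchLoss
  refine Finset.sum_congr rfl fun s _ => Finset.sum_congr rfl fun r _ => ?_
  have h3 : (0:ℝ) < pNI P s r ^ θ := Real.rpow_pos_of_pos (my_pNI_pos P hP0 s r) θ
  congr 1
  simp only [hJ, hQ]
  have e1 : (∑ s', p s' * P s' r) ≠ 0 := (hM r).ne'
  have e2 : (∑ s', p s' * pNI P s' r ^ θ) ≠ 0 := (hZ r).ne'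
  have e3 : pNI P s r ^ θ ≠ 0 := h3.ne'
  field_simp


lemma my_log_pNI (P : S → (∀ n, R n) → ℝ) (hP0 : ∀ s r, 0 < P s r)
    [Nonempty (∀ n, R n)] (s : S) (r : ∀ n, R n) :
    Real.log (pNI P s r) = ∑ n, Real.log (coordMarginal P n s (r n)) := by
  rw [pNI, Real.log_prod]
  exact fun n _ => (my_cm_pos P hP0 n s (r n)).ne'

lemma my_A_decomp (p : S → ℝ) (P : S → (∀ n, R n) → ℝ) (hP0 : ∀ s r, 0 < P s r)
    [Nonempty (∀ n, R n)] :
    ∑ s, ∑ r, p s * P s r * Real.log (pNI P s r)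
      = ∑ n, ∑ s, p s * ∑ x, coordMarginal P n s x
          * Real.log (coordMarginal P n s x) := by
  simp_rw [my_log_pNI P hP0, Finset.mul_sum]
  refine Eq.trans (Finset.sum_congr rfl fun s _ => Finset.sum_comm) ?_
  refine Eq.trans (Finset.sum_comm) ?_
  refine Finset.sum_congr rfl fun n _ => Finset.sum_congr rfl fun s _ => ?_
  have hf : ∑ r, P s r * Real.log (coordMarginal P n s (r n))
      = ∑ x, coordMarginal P n s x * Real.log (coordMarginal P n s x) :=
    my_fiber (fun r => P s r) n (fun x => Real.log (coordMarginal P n s x))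
  simp_rw [mul_assoc, ← Finset.mul_sum]
  exact congrArg (p s * ·) hf

lemma my_fiber_M (p : S → ℝ) (P : S → (∀ n, R n) → ℝ) (n : Fin N) (x : R n) :
    (∑ r, if r n = x then (∑ s', p s' * P s' r) else 0)
      = ∑ s', p s' * coordMarginal P n s' x := by
  have e1 : ∀ r : (∀ n, R n), (if r n = x then (∑ s', p s' * P s' r) else 0)
      = ∑ s', (if r n = x then p s' * P s' r else 0) := by
    intro r; split <;> simp
  simp_rw [e1]
  rw [Finset.sum_comm]
  refine Finset.sum_congr rfl fun s' _ => ?_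
  rw [coordMarginal, Finset.mul_sum]
  exact Finset.sum_congr rfl fun r _ => by split <;> simp

lemma my_B_decomp (p : S → ℝ) (P : S → (∀ n, R n) → ℝ) (hP0 : ∀ s r, 0 < P s r)
    [Nonempty (∀ n, R n)] :
    ∑ r, (∑ s', p s' * P s' r) * (∑ s, p s * Real.log (pNI P s r))
      = ∑ n, ∑ s, p s * ∑ x, (∑ s', p s' * coordMarginal P n s' x)
          * Real.log (coordMarginal P n s x) := by
  simp_rw [my_log_pNI P hP0, Finset.mul_sum]
  refine Eq.trans (Finset.sum_congr rfl fun r _ => Finset.sum_comm) ?_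
  refine Eq.trans (Finset.sum_comm) ?_
  refine Finset.sum_congr rfl fun n _ => Eq.trans Finset.sum_comm ?_
  refine Finset.sum_congr rfl fun s _ => ?_
  have hf : ∑ r, (∑ s', p s' * P s' r) * Real.log (coordMarginal P n s (r n))
      = ∑ x, (∑ s', p s' * coordMarginal P n s' x)
          * Real.log (coordMarginal P n s x) := by
    have h0 := my_fiber (fun r => ∑ s', p s' * P s' r) n
      (fun x => Real.log (coordMarginal P n s x))
    simp_rw [my_fiber_M p P n] at h0
    exact h0
  have e : ∀ r : (∀ n, R n), (∑ s', p s' * P s' r)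
      * (p s * Real.log (coordMarginal P n s (r n)))
      = p s * ((∑ s', p s' * P s' r) * Real.log (coordMarginal P n s (r n))) :=
    fun r => by ring
  simp_rw [e, ← Finset.mul_sum]
  exact congrArg (p s * ·) hf

lemma my_sign {a b : ℝ} (ha : 0 < a) (hb : 0 < b) :
    0 ≤ (a - b) * (Real.log a - Real.log b) := by
  rcases le_total a b with h | h
  · have := Real.log_le_log ha h; nlinarith
  · have := Real.log_le_log hb h; nlinarith

lemma my_sign_eq {a b : ℝ} (ha : 0 < a) (hb : 0 < b)
    (h : (a - b) * (Real.log a - Real.log b) = 0) : a = b := by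
  rcases lt_trichotomy a b with hlt | heq | hgt
  · have h1 : Real.log a < Real.log b := Real.log_lt_log ha hlt
    nlinarith
  · exact heq
  · have h1 : Real.log b < Real.log a := Real.log_lt_log hb hgt
    nlinarith


lemma my_zero_sum (p : S → ℝ) (hp1 : ∑ s, p s = 1)
    (P : S → (∀ n, R n) → ℝ) (n : Fin N) :
    ∑ s, p s * ∑ x, (coordMarginal P n s x - ∑ s', p s' * coordMarginal P n s' x)
      * Real.log (∑ s', p s' * coordMarginal P n s' x) = 0 := by
  simp_rw [Finset.mul_sum]
  rw [Finset.sum_comm]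
  refine Finset.sum_eq_zero fun x _ => ?_
  have e : ∀ s, p s * ((coordMarginal P n s x - ∑ s', p s' * coordMarginal P n s' x)
      * Real.log (∑ s', p s' * coordMarginal P n s' x))
      = (p s * coordMarginal P n s x)
          * Real.log (∑ s', p s' * coordMarginal P n s' x)
        - p s * ((∑ s', p s' * coordMarginal P n s' x)
          * Real.log (∑ s', p s' * coordMarginal P n s' x)) := fun s => by ring
  simp_rw [e]
  rw [Finset.sum_sub_distrib, ← Finset.sum_mul, ← Finset.sum_mul, hp1, one_mul, sub_self]

lemma my_final_decomp (p : S → ℝ) (hp1 : ∑ s, p s = 1)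
    (P : S → (∀ n, R n) → ℝ) (hP0 : ∀ s r, 0 < P s r) [Nonempty (∀ n, R n)] :
    (∑ s, ∑ r, p s * P s r * Real.log (pNI P s r))
      - (∑ r, (∑ s', p s' * P s' r) * (∑ s, p s * Real.log (pNI P s r)))
    = ∑ n, ∑ s, p s * ∑ x,
        (coordMarginal P n s x - ∑ s', p s' * coordMarginal P n s' x)
        * (Real.log (coordMarginal P n s x)
            - Real.log (∑ s', p s' * coordMarginal P n s' x)) := by
  rw [my_A_decomp p P hP0, my_B_decomp p P hP0, ← Finset.sum_sub_distrib]
  refine Finset.sum_congr rfl fun n _ => ?_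
  have hz := my_zero_sum p hp1 P n
  have e1 : ∀ s : S, p s * (∑ x, coordMarginal P n s x
        * Real.log (coordMarginal P n s x))
      - p s * (∑ x, (∑ s', p s' * coordMarginal P n s' x)
        * Real.log (coordMarginal P n s x))
      = p s * ∑ x, (coordMarginal P n s x - ∑ s', p s' * coordMarginal P n s' x)
        * Real.log (coordMarginal P n s x) := by
    intro s
    rw [← mul_sub, ← Finset.sum_sub_distrib]
    simp_rw [sub_mul]
  have e2 : ∀ s : S, p s * ∑ x,
        (coordMarginal P n s x - ∑ s', p s' * coordMarginal P n s' x)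
        * (Real.log (coordMarginal P n s x)
          - Real.log (∑ s', p s' * coordMarginal P n s' x))
      = p s * (∑ x, (coordMarginal P n s x - ∑ s', p s' * coordMarginal P n s' x)
          * Real.log (coordMarginal P n s x))
        - p s * (∑ x, (coordMarginal P n s x - ∑ s', p s' * coordMarginal P n s' x)
          * Real.log (∑ s', p s' * coordMarginal P n s' x)) := by
    intro s
    rw [← mul_sub, ← Finset.sum_sub_distrib]
    simp_rw [mul_sub]
  rw [← Finset.sum_sub_distrib]
  rw [Finset.sum_congr rfl fun s _ => e1 s, Finset.sum_congr rfl fun s _ => e2 s,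
    Finset.sum_sub_distrib, hz, sub_zero]


lemma my_loss_const (p : S → ℝ) (hp : ∀ s, 0 < p s) (hp1 : ∑ s, p s = 1)
    (P : S → (∀ n, R n) → ℝ) (hP0 : ∀ s r, 0 < P s r) [Nonempty (∀ n, R n)]
    (θ : ℝ) (c : (∀ n, R n) → ℝ) (hcpos : ∀ r, 0 < c r)
    (hc : ∀ s r, pNI P s r = c r) :
    mismatchLoss p P θ = mutInfo p P := by
  rw [my_loss_identity p hp hp1 P hP0 θ]
  have hZ : ∀ r : (∀ n, R n), (∑ s', p s' * pNI P s' r ^ θ) = c r ^ θ := by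
    intro r
    simp_rw [hc, ← Finset.sum_mul, hp1, one_mul]
  have hlog : ∀ (s : S) (r : (∀ n, R n)),
      Real.log (pNI P s r) = Real.log (c r) := fun s r => by rw [hc]
  simp_rw [hZ, hlog, Real.log_rpow (hcpos _)]
  have swap : ∑ s, ∑ r, p s * P s r * Real.log (c r)
      = ∑ r, (∑ s, p s * P s r) * Real.log (c r) := by
    rw [Finset.sum_comm]
    exact Finset.sum_congr rfl fun r _ => (Finset.sum_mul _ _ _).symm
  rw [swap]
  have e : ∀ r : (∀ n, R n), (∑ s, p s * P s r) * (θ * Real.log (c r))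
      = θ * ((∑ s, p s * P s r) * Real.log (c r)) := fun r => by ring
  simp_rw [e, ← Finset.mul_sum]
  ring

lemma my_A_le_B (p : S → ℝ) (hp : ∀ s, 0 < p s) (hp1 : ∑ s, p s = 1)
    (P : S → (∀ n, R n) → ℝ) (hP0 : ∀ s r, 0 < P s r) (hP1 : ∀ s, ∑ r, P s r = 1)
    [Nonempty (∀ n, R n)]
    (H : ∀ θ : ℝ, mutInfo p P ≤ mismatchLoss p P θ) :
    (∑ s, ∑ r, p s * P s r * Real.log (pNI P s r))
      ≤ ∑ r, (∑ s', p s' * P s' r) * (∑ s, p s * Real.log (pNI P s r)) := by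
  classical
  have hS : Nonempty S := my_nonempty_S p hp1
  have hM : ∀ r, 0 < ∑ s', p s' * P s' r := fun r =>
    Finset.sum_pos (fun s _ => mul_pos (hp s) (hP0 s r)) Finset.univ_nonempty
  set A := ∑ s, ∑ r, p s * P s r * Real.log (pNI P s r) with hA
  set B := ∑ r, (∑ s', p s' * P s' r) * (∑ s, p s * Real.log (pNI P s r)) with hB
  set G := ∑ s, ∑ r, |Real.log (pNI P s r)| with hGdef
  have hG0 : 0 ≤ G := Finset.sum_nonneg fun s _ =>
    Finset.sum_nonneg fun r _ => abs_nonneg _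
  have habs : ∀ s r, |Real.log (pNI P s r)| ≤ G := by
    intro s r
    calc |Real.log (pNI P s r)| ≤ ∑ r', |Real.log (pNI P s r')| :=
          Finset.single_le_sum (f := fun r' => |Real.log (pNI P s r')|)
            (fun _ _ => abs_nonneg _) (Finset.mem_univ r)
      _ ≤ G := Finset.single_le_sum
          (f := fun s => ∑ r, |Real.log (pNI P s r)|)
          (fun s _ => Finset.sum_nonneg fun r _ => abs_nonneg _)
          (Finset.mem_univ s)
  have key : ∀ θ : ℝ, 0 < θ → θ ≤ 1 / (1 + G) → A ≤ B + θ * G ^ 2 := by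
    intro θ hθ0 hθ1
    have hθG : ∀ s r, |θ * Real.log (pNI P s r)| ≤ 1 := by
      intro s r
      rw [abs_mul, abs_of_pos hθ0]
      calc θ * |Real.log (pNI P s r)| ≤ (1 / (1 + G)) * G :=
            mul_le_mul hθ1 (habs s r) (abs_nonneg _) (by positivity)
        _ ≤ 1 := by rw [div_mul_eq_mul_div, div_le_one (by linarith)]; linarith
    have hZ : ∀ r, 0 < ∑ s', p s' * pNI P s' r ^ θ := fun r =>
      Finset.sum_pos (fun s _ => mul_pos (hp s)
        (Real.rpow_pos_of_pos (my_pNI_pos P hP0 s r) θ)) Finset.univ_nonempty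
    have hΦ : 0 ≤ ∑ r, (∑ s, p s * P s r)
        * Real.log (∑ s', p s' * pNI P s' r ^ θ) - θ * A := by
      have h := H θ
      rw [my_loss_identity p hp hp1 P hP0 θ] at h
      linarith
    have hZle : ∀ r : (∀ n, R n), Real.log (∑ s', p s' * pNI P s' r ^ θ)
        ≤ θ * (∑ s, p s * Real.log (pNI P s r)) + θ ^ 2 * G ^ 2 := by
      intro r
      have h1 : Real.log (∑ s', p s' * pNI P s' r ^ θ)
          ≤ (∑ s', p s' * pNI P s' r ^ θ) - 1 := Real.log_le_sub_one_of_pos (hZ r)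
      have h2 : (∑ s', p s' * pNI P s' r ^ θ)
          ≤ ∑ s, p s * (1 + θ * Real.log (pNI P s r) + θ ^ 2 * G ^ 2) := by
        refine Finset.sum_le_sum fun s _ => ?_
        refine mul_le_mul_of_nonneg_left ?_ (hp s).le
        rw [Real.rpow_def_of_pos (my_pNI_pos P hP0 s r), mul_comm]
        have hb := abs_le.mp (Real.abs_exp_sub_one_sub_id_le (hθG s r))
        have h3 : |θ * Real.log (pNI P s r)| ≤ θ * G := by
          rw [abs_mul, abs_of_pos hθ0]
          exact mul_le_mul_of_nonneg_left (habs s r) hθ0.le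
        have hy2 : (θ * Real.log (pNI P s r)) ^ 2 ≤ θ ^ 2 * G ^ 2 := by
          calc (θ * Real.log (pNI P s r)) ^ 2
              = |θ * Real.log (pNI P s r)| ^ 2 := (sq_abs _).symm
            _ ≤ (θ * G) ^ 2 := pow_le_pow_left₀ (abs_nonneg _) h3 2
            _ = θ ^ 2 * G ^ 2 := by ring
        linarith [hb.2, hy2]
      have h3 : ∑ s, p s * (1 + θ * Real.log (pNI P s r) + θ ^ 2 * G ^ 2)
          = 1 + θ * (∑ s, p s * Real.log (pNI P s r)) + θ ^ 2 * G ^ 2 := by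
        have e : ∀ s : S, p s * (1 + θ * Real.log (pNI P s r) + θ ^ 2 * G ^ 2)
            = p s + θ * (p s * Real.log (pNI P s r)) + p s * (θ ^ 2 * G ^ 2) :=
          fun s => by ring
        simp_rw [e, Finset.sum_add_distrib, ← Finset.mul_sum, ← Finset.sum_mul,
          hp1, one_mul]
      linarith [h1, h2, h3.le, h3.ge]
    have hMsum : ∑ r, ∑ s, p s * P s r = 1 := my_sum_M p hp1 P hP1
    have hstep : ∑ r, (∑ s, p s * P s r)
        * Real.log (∑ s', p s' * pNI P s' r ^ θ) ≤ θ * B + θ ^ 2 * G ^ 2 := by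
      calc ∑ r, (∑ s, p s * P s r) * Real.log (∑ s', p s' * pNI P s' r ^ θ)
          ≤ ∑ r, (∑ s, p s * P s r)
            * (θ * (∑ s, p s * Real.log (pNI P s r)) + θ ^ 2 * G ^ 2) :=
            Finset.sum_le_sum fun r _ =>
              mul_le_mul_of_nonneg_left (hZle r) (hM r).le
        _ = θ * B + θ ^ 2 * G ^ 2 := by
            have e : ∀ r : (∀ n, R n), (∑ s, p s * P s r)
                * (θ * (∑ s, p s * Real.log (pNI P s r)) + θ ^ 2 * G ^ 2)
                = θ * ((∑ s', p s' * P s' r) * (∑ s, p s * Real.log (pNI P s r)))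
                  + (∑ s, p s * P s r) * (θ ^ 2 * G ^ 2) := fun r => by ring
            simp_rw [e, Finset.sum_add_distrib, ← Finset.mul_sum, ← Finset.sum_mul,
              hMsum, one_mul]
            rw [hB]
    have hfin : θ * A ≤ θ * B + θ ^ 2 * G ^ 2 := by linarith
    nlinarith
  by_contra hcon
  push_neg at hcon
  set ε := A - B with hε
  have hε0 : 0 < ε := by simp [hε]; linarith
  set θ := min (1 / (1 + G)) (ε / (2 * (G ^ 2 + 1))) with hθdef
  have hθ0 : 0 < θ := lt_min (by positivity) (by positivity)
  have h1 := key θ hθ0 (min_le_left _ _)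
  have h2 : θ * G ^ 2 < ε := by
    calc θ * G ^ 2 ≤ (ε / (2 * (G ^ 2 + 1))) * G ^ 2 :=
          mul_le_mul_of_nonneg_right (min_le_right _ _) (sq_nonneg _)
      _ < ε := by
          rw [div_mul_eq_mul_div, div_lt_iff₀ (by positivity)]
          nlinarith
  linarith

end helpers

/-- Under full joint support, `D(0) = I(S;R)`, hence
`inf_θ D(θ) ≤ I(S;R)`; and `inf_θ D(θ) = I(S;R)` iff every coordinate marginal
`P_n(·|s)` is the same for all stimuli: when ignoring noise correlations, the
mismatched-decoding loss equals the total encoded information iff the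
corresponding encoding loss does. -/
theorem mismatched_loss_reaches_total_information_iff
    {S : Type*} [Fintype S] {N : ℕ} (R : Fin N → Type*)
    [∀ n, Fintype (R n)] [∀ n, DecidableEq (R n)]
    (p : S → ℝ) (hp : ∀ s, 0 < p s) (hp1 : ∑ s, p s = 1)
    (P : S → (∀ n, R n) → ℝ) (hP0 : ∀ s r, 0 < P s r)
    (hP1 : ∀ s, ∑ r, P s r = 1) :
    mismatchLoss p P 0 = mutInfo p P ∧
    (⨅ θ : ℝ, mismatchLoss p P θ) ≤ mutInfo p P ∧
    ((⨅ θ : ℝ, mismatchLoss p P θ) = mutInfo p P ↔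
      ∀ (n : Fin N) (s s' : S) (x : R n),
        coordMarginal P n s x = coordMarginal P n s' x) := by
    classical
  haveI hRne : Nonempty (∀ n, R n) := my_nonempty_R p hp1 P hP1
  have hSne : Nonempty S := my_nonempty_S p hp1
  have h0 : mismatchLoss p P 0 = mutInfo p P := by
    rw [my_loss_identity p hp hp1 P hP0 0]
    simp [Real.rpow_zero, hp1]
  have hbdd : BddBelow (Set.range fun θ : ℝ => mismatchLoss p P θ) := by
    refine ⟨0, ?_⟩
    rintro y ⟨θ, rfl⟩
    exact my_loss_nonneg p hp hp1 P hP0 hP1 θ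
  have hle : (⨅ θ : ℝ, mismatchLoss p P θ) ≤ mutInfo p P := h0 ▸ ciInf_le hbdd 0
  refine ⟨h0, hle, ?_, ?_⟩
  · intro hinf n s s' x
    have H : ∀ θ : ℝ, mutInfo p P ≤ mismatchLoss p P θ := fun θ =>
      hinf ▸ ciInf_le hbdd θ
    have hAB := my_A_le_B p hp hp1 P hP0 hP1 H
    have hdec := my_final_decomp p hp1 P hP0
    have hMnpos : ∀ (n : Fin N) (x : R n),
        0 < ∑ s', p s' * coordMarginal P n s' x := fun n x =>
      Finset.sum_pos (fun t _ => mul_pos (hp t) (my_cm_pos P hP0 n t x))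
        Finset.univ_nonempty
    have hatom : ∀ (n : Fin N) (t : S) (x : R n),
        0 ≤ (coordMarginal P n t x - ∑ s', p s' * coordMarginal P n s' x)
          * (Real.log (coordMarginal P n t x)
            - Real.log (∑ s', p s' * coordMarginal P n s' x)) := fun n t x =>
      my_sign (my_cm_pos P hP0 n t x) (hMnpos n x)
    have hinner : ∀ (n : Fin N) (t : S), 0 ≤ p t
        * ∑ x, (coordMarginal P n t x - ∑ s', p s' * coordMarginal P n s' x)
          * (Real.log (coordMarginal P n t x)
            - Real.log (∑ s', p s' * coordMarginal P n s' x)) := fun n t =>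
      mul_nonneg (hp t).le (Finset.sum_nonneg fun x _ => hatom n t x)
    have htot : ∑ n : Fin N, ∑ t : S, p t
        * (∑ x, (coordMarginal P n t x - ∑ s', p s' * coordMarginal P n s' x)
          * (Real.log (coordMarginal P n t x)
            - Real.log (∑ s', p s' * coordMarginal P n s' x))) = 0 := by
      refine le_antisymm ?_ (Finset.sum_nonneg fun n _ =>
        Finset.sum_nonneg fun t _ => hinner n t)
      rw [← hdec]
      linarith
    have hcm : ∀ (t : S), coordMarginal P n t x
        = ∑ s', p s' * coordMarginal P n s' x := by
      intro t
      have h1 := (Finset.sum_eq_zero_iff_of_nonneg (fun m _ =>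
        Finset.sum_nonneg fun u _ => hinner m u)).mp htot n (Finset.mem_univ n)
      have h2 := (Finset.sum_eq_zero_iff_of_nonneg (fun u _ =>
        hinner n u)).mp h1 t (Finset.mem_univ t)
      have h3 : (∑ y, (coordMarginal P n t y - ∑ s', p s' * coordMarginal P n s' y)
          * (Real.log (coordMarginal P n t y)
            - Real.log (∑ s', p s' * coordMarginal P n s' y))) = 0 := by
        rcases mul_eq_zero.mp h2 with h | h
        · exact absurd h (hp t).ne'
        · exact h
      have h4 := (Finset.sum_eq_zero_iff_of_nonneg (fun y _ =>
        hatom n t y)).mp h3 x (Finset.mem_univ x)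
      exact my_sign_eq (my_cm_pos P hP0 n t x) (hMnpos n x) h4
    rw [hcm s, hcm s']
  · intro hmarg
    obtain ⟨s₀⟩ := hSne
    have hconst : ∀ θ : ℝ, mismatchLoss p P θ = mutInfo p P := by
      intro θ
      refine my_loss_const p hp hp1 P hP0 θ (fun r => pNI P s₀ r)
        (fun r => my_pNI_pos P hP0 s₀ r) ?_
      intro s r
      unfold pNI
      exact Finset.prod_congr rfl fun n _ => by rw [hmarg n s s₀ (r n)]
    simp_rw [hconst]
    exact ciInf_const
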